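/- Let r be even with 2 ≤ r ≤ n, let x₁,…,x_r ∈ F₂ⁿ be linearly independent, and let A ∈ SGL_n(F₂) with xᵢᵀ A⁻¹ xⱼ = 1 for all i, j ≤ r. Then there exists x_{r+1} ∈ F₂ⁿ and an index s ∈ {1,…,r} such that x_sᵀ A⁻¹ x_{r+1} = 1 while x_tᵀ A⁻¹ x_{r+1} = 0 for all t ∈ {1,…,r+1} \ {s}. -/

import Mathlib

open Matrix

/-- In `ZMod 2`, squaring is the identity. -/
private lemma zmod2_mul_self (a : ZMod 2) : a * a = a := by revert a; decide

private lemma sum_dotProduct' {k m : ℕ} (f : Fin k → Fin m → ZMod 2) (u : Fin m → ZMod 2) :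
    (∑ i, f i) ⬝ᵥ u = ∑ i, f i ⬝ᵥ u := by
  simp only [dotProduct, Finset.sum_apply, Finset.sum_mul]
  exact Finset.sum_comm

/-- For a symmetric matrix over `ZMod 2`, the quadratic form is the linear form
given by the diagonal. -/
private lemma quad_diag {n : ℕ} (M : Matrix (Fin n) (Fin n) (ZMod 2)) (hM : M.IsSymm)
    (v : Fin n → ZMod 2) : v ⬝ᵥ M *ᵥ v = (fun i => M i i) ⬝ᵥ v := by
  classical
  have expand : v ⬝ᵥ M *ᵥ v = ∑ p : Fin n × Fin n, v p.1 * M p.1 p.2 * v p.2 := by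
    rw [Fintype.sum_prod_type]
    simp [dotProduct, mulVec, Finset.mul_sum, mul_assoc]
  rw [expand]
  have hsplit :
      (∑ p : Fin n × Fin n, v p.1 * M p.1 p.2 * v p.2) =
        (∑ p ∈ Finset.univ.filter (fun p : Fin n × Fin n => p.1 = p.2),
            v p.1 * M p.1 p.2 * v p.2) +
        (∑ p ∈ Finset.univ.filter (fun p : Fin n × Fin n => ¬ p.1 = p.2),
            v p.1 * M p.1 p.2 * v p.2) :=
    (Finset.sum_filter_add_sum_filter_not _ _ _).symm
  have hoff : (∑ p ∈ Finset.univ.filter (fun p : Fin n × Fin n => ¬ p.1 = p.2),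
      v p.1 * M p.1 p.2 * v p.2) = 0 := by
    refine Finset.sum_involution (fun p _ => Prod.swap p) ?_ ?_ ?_ ?_
    · intro p _
      have hsym : M p.2 p.1 = M p.1 p.2 := by
        conv_lhs => rw [← hM.eq]
        rfl
      have : v p.2 * M p.2 p.1 * v p.1 = v p.1 * M p.1 p.2 * v p.2 := by
        rw [hsym]; ring
      simp only [Prod.swap]
      rw [this]
      exact (two_mul _).symm.trans (by
        have : (2 : ZMod 2) = 0 := by decide
        rw [this, zero_mul])
    · intro p hp _
      simp only [Finset.mem_filter] at hp
      intro h
      exact hp.2 (congrArg Prod.snd h.symm ▸ (by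
        have := congrArg Prod.fst h
        simpa [Prod.swap] using this.symm))
    · intro p hp
      simp only [Finset.mem_filter, Finset.mem_univ, true_and] at hp ⊢
      exact fun h => hp h.symm
    · intro p _; rfl
  have hdiag : (∑ p ∈ Finset.univ.filter (fun p : Fin n × Fin n => p.1 = p.2),
      v p.1 * M p.1 p.2 * v p.2) = ∑ i, M i i * v i := by
    rw [Finset.sum_filter, Fintype.sum_prod_type]
    have : ∀ i : Fin n, (∑ j, if i = j then v i * M i j * v j else 0)
        = M i i * v i := by
      intro i
      rw [Finset.sum_ite_eq (Finset.univ) i (fun j => v i * M i j * v j)]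
      simp only [Finset.mem_univ, if_true]
      have : v i * M i i * v i = M i i * (v i * v i) := by ring
      rw [this, zmod2_mul_self]
    simp only [this]
  rw [hsplit, hoff, hdiag, add_zero]
  rfl

/-- If the rows `z` are linearly independent, then the system `z i ⬝ᵥ w = t i` is solvable. -/
private lemma dot_surj {m n : ℕ} (z : Fin m → Fin n → ZMod 2)
    (hz : LinearIndependent (ZMod 2) z) (t : Fin m → ZMod 2) :
    ∃ w : Fin n → ZMod 2, ∀ i, z i ⬝ᵥ w = t i := by
  classical
  set M : Matrix (Fin m) (Fin n) (ZMod 2) := Matrix.of z with hMdef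
  have hrankT : Mᵀ.rank = m := by
    rw [Matrix.rank_eq_finrank_span_cols, Matrix.col_transpose]
    show Module.finrank (ZMod 2) (Submodule.span (ZMod 2) (Set.range M)) = m
    have : Set.range (Matrix.of z : Matrix (Fin m) (Fin n) (ZMod 2)) = Set.range z := rfl
    rw [hMdef, this, finrank_span_eq_card hz, Fintype.card_fin]
  have hrank : M.rank = m := by rw [← Matrix.rank_transpose, hrankT]
  have hrange : LinearMap.range M.mulVecLin = ⊤ := by
    apply Submodule.eq_top_of_finrank_eq
    rw [← Matrix.rank] at *
    rw [hrank, Module.finrank_pi, Fintype.card_fin]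
  have ht : t ∈ LinearMap.range M.mulVecLin := by rw [hrange]; trivial
  obtain ⟨w, hw⟩ := ht
  exact ⟨w, fun i => congrFun hw i⟩

/-- Given even `r` with `2 ≤ r ≤ n`, linearly independent `x₁,…,x_r` and `A ∈ SGL_n(F₂)`
with `xᵢᵀ A⁻¹ xⱼ = 1` for all `i,j`, there is a vector `x_{r+1}` and an index `s` with
`x_sᵀ A⁻¹ x_{r+1} = 1`, `x_tᵀ A⁻¹ x_{r+1} = 0` for all `t ≠ s`, and
`x_{r+1}ᵀ A⁻¹ x_{r+1} = 0`. -/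
theorem exists_extension_vector {n r : ℕ} (hr : Even r) (hr2 : 2 ≤ r) (hrn : r ≤ n)
    (x : Fin r → Fin n → ZMod 2) (hli : LinearIndependent (ZMod 2) x)
    (A : Matrix (Fin n) (Fin n) (ZMod 2)) (hAs : A.IsSymm) (hA : IsUnit A)
    (hx : ∀ i j, x i ⬝ᵥ A⁻¹ *ᵥ x j = 1) :
    ∃ (w : Fin n → ZMod 2) (s : Fin r),
      x s ⬝ᵥ A⁻¹ *ᵥ w = 1 ∧
      (∀ t : Fin r, t ≠ s → x t ⬝ᵥ A⁻¹ *ᵥ w = 0) ∧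
      w ⬝ᵥ A⁻¹ *ᵥ w = 0 := by
  classical
  have hAdet : IsUnit A.det := (Matrix.isUnit_iff_isUnit_det A).mp hA
  have hBu : IsUnit A⁻¹ := Matrix.isUnit_nonsing_inv_iff.mpr hA
  have hBs : (A⁻¹).IsSymm := by
    unfold Matrix.IsSymm
    rw [Matrix.transpose_nonsing_inv, hAs.eq]
  -- Key: move the matrix to the left argument
  have key : ∀ u v : Fin n → ZMod 2, u ⬝ᵥ A⁻¹ *ᵥ v = (A⁻¹ *ᵥ u) ⬝ᵥ v := by
    intro u v
    rw [dotProduct_mulVec]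
    congr 1
    rw [← Matrix.vecMul_transpose, hBs.eq]
  -- the diagonal vector and its representing vector
  set d : Fin n → ZMod 2 := fun i => A⁻¹ i i with hd
  set c : Fin n → ZMod 2 := A *ᵥ d with hcdef
  have hq : ∀ v, v ⬝ᵥ A⁻¹ *ᵥ v = d ⬝ᵥ v := fun v => quad_diag _ hBs v
  have hcB : A⁻¹ *ᵥ c = d := by
    rw [hcdef, Matrix.mulVec_mulVec, Matrix.nonsing_inv_mul A hAdet, Matrix.one_mulVec]
  have hc : ∀ v, c ⬝ᵥ A⁻¹ *ᵥ v = d ⬝ᵥ v := by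
    intro v; rw [key, hcB]
  -- the reduction of the goal via solvability
  have solve : ∀ {m : ℕ} (y : Fin m → Fin n → ZMod 2), LinearIndependent (ZMod 2) y →
      ∀ t : Fin m → ZMod 2, ∃ w, ∀ i, y i ⬝ᵥ A⁻¹ *ᵥ w = t i := by
    intro m y hy t
    have hz : LinearIndependent (ZMod 2) (fun i => A⁻¹ *ᵥ y i) := by
      have := LinearIndependent.map' hy (Matrix.mulVecLin A⁻¹) ?_
      · exact this
      · rw [LinearMap.ker_eq_bot]
        intro a b hab
        have : A *ᵥ (A⁻¹ *ᵥ a) = A *ᵥ (A⁻¹ *ᵥ b) := by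
          simpa [Matrix.mulVecLin] using congrArg (fun v => A *ᵥ v) hab
        simpa [Matrix.mulVec_mulVec, Matrix.mul_nonsing_inv A hAdet,
          Matrix.one_mulVec] using this
    obtain ⟨w, hw⟩ := dot_surj (fun i => A⁻¹ *ᵥ y i) hz t
    exact ⟨w, fun i => by rw [key]; exact hw i⟩
  by_cases hcs : c ∈ Submodule.span (ZMod 2) (Set.range x)
  · -- c is in the span of the x's
    obtain ⟨a, ha⟩ := (Submodule.mem_span_range_iff_exists_fun _).mp hcs
    -- the coefficients sum to 1
    have j0 : Fin r := ⟨0, by omega⟩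
    have hsum : (∑ i, a i) = 1 := by
      have h1 : c ⬝ᵥ A⁻¹ *ᵥ x j0 = ∑ i, a i := by
        rw [← ha]
        rw [sum_dotProduct']
        congr 1
        ext i
        rw [smul_dotProduct, hx i j0, smul_eq_mul, mul_one]
      have h2 : c ⬝ᵥ A⁻¹ *ᵥ x j0 = 1 := by
        rw [hc, ← hq, hx]
      rw [← h1, h2]
    -- not all coefficients are 1
    have hex : ∃ s : Fin r, a s = 0 := by
      by_contra hno
      push_neg at hno
      have hall : ∀ i, a i = 1 := by
        intro i
        have h := hno i
        revert h
        generalize a i = b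
        revert b
        decide
      have : (∑ i : Fin r, a i) = (r : ZMod 2) := by
        simp [hall]
      rw [hsum] at this
      have hr0 : (r : ZMod 2) = 0 :=
        (ZMod.natCast_eq_zero_iff r 2).mpr hr.two_dvd
      rw [hr0] at this
      exact one_ne_zero this
    obtain ⟨s, hs⟩ := hex
    obtain ⟨w, hw⟩ := solve x hli (fun i => if i = s then 1 else 0)
    refine ⟨w, s, ?_, ?_, ?_⟩
    · rw [hw s]; simp
    · intro t hts; rw [hw t]; simp [hts]
    · rw [hq, ← hc, ← ha, sum_dotProduct']
      have : ∀ i ∈ Finset.univ, (a i • x i) ⬝ᵥ A⁻¹ *ᵥ w = a i * (if i = s then 1 else 0) := by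
        intro i _
        rw [smul_dotProduct, hw i, smul_eq_mul]
      rw [Finset.sum_congr rfl this]
      simp [hs]
  · -- c is not in the span: extend the family
    set y : Fin (r + 1) → Fin n → ZMod 2 := Fin.snoc x c with hy
    have hyli : LinearIndependent (ZMod 2) y :=
      linearIndependent_fin_snoc.mpr ⟨hli, hcs⟩
    have s0 : Fin r := ⟨0, by omega⟩
    obtain ⟨w, hw⟩ := solve y hyli (fun i => if i = Fin.castSucc s0 then 1 else 0)
    refine ⟨w, s0, ?_, ?_, ?_⟩
    · have := hw (Fin.castSucc s0)
      rw [hy] at this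
      simpa [Fin.snoc_castSucc] using this
    · intro t hts
      have := hw (Fin.castSucc t)
      rw [hy] at this
      have hne : Fin.castSucc t ≠ Fin.castSucc s0 := by
        simpa [Fin.castSucc_inj] using hts
      simpa [Fin.snoc_castSucc, hne] using this
    · have := hw (Fin.last r)
      rw [hy] at this
      have hne : Fin.last r ≠ Fin.castSucc s0 := by
        intro h
        have := congrArg Fin.val h
        simp at this
        omega
      rw [hq, ← hc]
      simpa [Fin.snoc_last, hne] using this
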